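/- (Two-dimensional Helly selection theorem.) For every sequence (qₙ) of functions qₙ : [0,1]×[0,1] → [0,1] such that each qₙ is weakly increasing in its first argument (for every fixed second argument) and weakly decreasing in its second argument (for every fixed first argument), there exist a subsequence (q_{n_k}) and a function q : [0,1]² → [0,1], weakly increasing in its first argument and weakly decreasing in its second argument, such that q_{n_k}(θ,ω) → q(θ,ω) as k → ∞ for Lebesgue-almost every (θ,ω) ∈ [0,1]². -/

import Mathlib

open MeasureTheory

/-- The unit interval `[0,1]` as a subtype of `ℝ`. -/
abbrev I01 : Type := Set.Icc (0:ℝ) 1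

namespace Stmt14Aux

/-- Clamp a rational into `[0,1]`. -/
noncomputable def clamp (x : ℚ) : I01 :=
  ⟨max 0 (min 1 (x:ℝ)), ⟨le_max_left _ _, max_le zero_le_one (min_le_left _ _)⟩⟩

lemma clamp_coe {x : ℚ} (h0 : (0:ℝ) ≤ x) (h1 : (x:ℝ) ≤ 1) : ((clamp x) : ℝ) = x := by
  simp only [clamp]
  rw [min_eq_right h1, max_eq_right (by simpa [min_eq_right h1] using h0)]

/-- Some enumeration of rational pairs, clamped into `[0,1]²`. -/
lemma exists_e : ∃ e : ℕ → I01 × I01, ∀ a b : ℚ, ∃ i, e i = (clamp a, clamp b) := by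
  obtain ⟨f, hf⟩ := exists_surjective_nat (ℚ × ℚ)
  refine ⟨fun n => (clamp (f n).1, clamp (f n).2), fun a b => ?_⟩
  obtain ⟨i, hi⟩ := hf (a, b)
  exact ⟨i, by simp only []; rw [hi]⟩

/-- The "effective order": `blt r p` means `q n r ≤ q n p` is forced by monotonicity. -/
def blt (r p : I01 × I01) : Prop := r.1 < p.1 ∧ p.2 < r.2

lemma blt_trans {p r s : I01 × I01} (h1 : blt p r) (h2 : blt r s) : blt p s :=
  ⟨h1.1.trans h2.1, h2.2.trans h1.2⟩

/-- Density of the rational grid in the effective strict order. -/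
lemma dense_e {e : ℕ → I01 × I01} (he : ∀ a b : ℚ, ∃ i, e i = (clamp a, clamp b))
    {p p' : I01 × I01} (h : blt p p') : ∃ i, blt p (e i) ∧ blt (e i) p' := by
  obtain ⟨aq, ha1, ha2⟩ := exists_rat_btwn (show (p.1:ℝ) < (p'.1:ℝ) from h.1)
  obtain ⟨bq, hb1, hb2⟩ := exists_rat_btwn (show (p'.2:ℝ) < (p.2:ℝ) from h.2)
  have ha0 : (0:ℝ) ≤ aq := le_of_lt (lt_of_le_of_lt p.1.2.1 ha1)
  have ha1' : (aq:ℝ) ≤ 1 := le_of_lt (lt_of_lt_of_le ha2 p'.1.2.2)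
  have hb0 : (0:ℝ) ≤ bq := le_of_lt (lt_of_le_of_lt p'.2.2.1 hb1)
  have hb1' : (bq:ℝ) ≤ 1 := le_of_lt (lt_of_lt_of_le hb2 p.2.2.2)
  obtain ⟨i, hi⟩ := he aq bq
  refine ⟨i, ?_⟩
  rw [hi]
  have hca : ((clamp aq : I01) : ℝ) = aq := clamp_coe ha0 ha1'
  have hcb : ((clamp bq : I01) : ℝ) = bq := clamp_coe hb0 hb1'
  refine ⟨⟨?_, ?_⟩, ?_, ?_⟩ <;> rw [← Subtype.coe_lt_coe]
  · rw [hca]; exact ha1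
  · rw [hcb]; exact hb2
  · rw [hca]; exact ha2
  · rw [hcb]; exact hb1

end Stmt14Aux

noncomputable instance : IsFiniteMeasure (volume : Measure I01) :=
  ⟨by rw [Measure.Subtype.volume_univ measurableSet_Icc.nullMeasurableSet]
      simp [Real.volume_Icc]⟩

open Stmt14Aux in
/-- two-dimensional Helly selection theorem: every sequence of functions
`[0,1]² → [0,1]` that are weakly increasing in the first argument and weakly decreasing in
the second admits a subsequence converging Lebesgue-almost everywhere to a function with
the same monotonicity and range properties. -/
theorem stmt14
    (q : ℕ → I01 × I01 → ℝ)
    (hq01 : ∀ n p, q n p ∈ Set.Icc (0:ℝ) 1)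
    (hmono : ∀ n (ω : I01), Monotone fun θ : I01 => q n (θ, ω))
    (hanti : ∀ n (θ : I01), Antitone fun ω : I01 => q n (θ, ω)) :
    ∃ (φ : ℕ → ℕ) (qe : I01 × I01 → ℝ), StrictMono φ ∧
      (∀ p, qe p ∈ Set.Icc (0:ℝ) 1) ∧
      (∀ ω : I01, Monotone fun θ : I01 => qe (θ, ω)) ∧
      (∀ θ : I01, Antitone fun ω : I01 => qe (θ, ω)) ∧
      ∀ᵐ p : I01 × I01, Filter.Tendsto (fun k => q (φ k) p) Filter.atTop (nhds (qe p)) := by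
  classical
  obtain ⟨e, he⟩ := exists_e
  -- q n r ≤ q n p whenever blt r p
  have hqle : ∀ n r p, blt r p → q n r ≤ q n p := by
    intro n r p h
    have h1 : q n (r.1, r.2) ≤ q n (p.1, r.2) := hmono n r.2 (le_of_lt h.1)
    have h2 : q n (p.1, r.2) ≤ q n (p.1, p.2) := hanti n p.1 (le_of_lt h.2)
    calc q n r = q n (r.1, r.2) := by rw [Prod.mk.eta]
    _ ≤ q n (p.1, r.2) := h1
    _ ≤ q n (p.1, p.2) := h2
    _ = q n p := by rw [Prod.mk.eta]
  -- extract a subsequence converging on the rational grid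
  let f : ℕ → (ℕ → Set.Icc (0:ℝ) 1) := fun n i => ⟨q n (e i), hq01 n _⟩
  obtain ⟨a, -, φ, hφ, hconv⟩ := isCompact_univ.tendsto_subseq (x := f) (fun n => Set.mem_univ _)
  have hconv' : ∀ i, Filter.Tendsto (fun k => q (φ k) (e i)) Filter.atTop (nhds ((a i : ℝ))) := by
    intro i
    have h1 := (tendsto_pi_nhds.1 hconv) i
    exact (continuous_subtype_val.tendsto _).comp h1
  set A : ℕ → ℝ := fun i => (a i : ℝ) with hA
  have hA0 : ∀ i, 0 ≤ A i := fun i => (a i).2.1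
  have hA1 : ∀ i, A i ≤ 1 := fun i => (a i).2.2
  -- lower and upper envelopes
  set S : I01 × I01 → Set ℝ :=
    fun p => insert 0 {x | ∃ i, blt (e i) p ∧ A i = x} with hS
  set T : I01 × I01 → Set ℝ :=
    fun p => insert 1 {x | ∃ i, blt p (e i) ∧ A i = x} with hT
  set L : I01 × I01 → ℝ := fun p => sSup (S p) with hLdef
  set U : I01 × I01 → ℝ := fun p => sInf (T p) with hUdef
  have hSne : ∀ p, (S p).Nonempty := fun p => ⟨0, Set.mem_insert _ _⟩
  have hTne : ∀ p, (T p).Nonempty := fun p => ⟨1, Set.mem_insert _ _⟩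
  have hSbdd : ∀ p, BddAbove (S p) := by
    intro p
    refine ⟨1, ?_⟩
    rintro x (rfl | ⟨i, -, rfl⟩)
    · exact zero_le_one
    · exact hA1 i
  have hTbdd : ∀ p, BddBelow (T p) := by
    intro p
    refine ⟨0, ?_⟩
    rintro x (rfl | ⟨i, -, rfl⟩)
    · exact zero_le_one
    · exact hA0 i
  have hL0 : ∀ p, 0 ≤ L p := fun p => le_csSup (hSbdd p) (Set.mem_insert _ _)
  have hL1 : ∀ p, L p ≤ 1 := by
    intro p
    refine csSup_le (hSne p) ?_
    rintro x (rfl | ⟨i, -, rfl⟩)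
    · exact zero_le_one
    · exact hA1 i
  have hU1 : ∀ p, U p ≤ 1 := fun p => csInf_le (hTbdd p) (Set.mem_insert _ _)
  -- monotonicity of L in the weak effective order
  have hLmono : ∀ p p' : I01 × I01, p.1 ≤ p'.1 → p'.2 ≤ p.2 → L p ≤ L p' := by
    intro p p' h1 h2
    refine csSup_le_csSup (hSbdd p') (hSne p) ?_
    rintro x (rfl | ⟨i, hi, rfl⟩)
    · exact Set.mem_insert _ _
    · exact Set.mem_insert_iff.2 (Or.inr ⟨i, ⟨lt_of_lt_of_le hi.1 h1, lt_of_le_of_lt h2 hi.2⟩, rfl⟩)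
  -- boundedness facts for liminf/limsup
  have hbddle : ∀ p, Filter.IsBoundedUnder (· ≤ ·) Filter.atTop (fun k => q (φ k) p) :=
    fun p => Filter.isBoundedUnder_of ⟨1, fun k => (hq01 _ _).2⟩
  have hbddge : ∀ p, Filter.IsBoundedUnder (· ≥ ·) Filter.atTop (fun k => q (φ k) p) :=
    fun p => Filter.isBoundedUnder_of ⟨0, fun k => (hq01 _ _).1⟩
  -- L p ≤ liminf
  have hkey1 : ∀ p, L p ≤ Filter.liminf (fun k => q (φ k) p) Filter.atTop := by
    intro p
    refine csSup_le (hSne p) ?_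
    rintro x (rfl | ⟨i, hib, rfl⟩)
    · exact Filter.le_liminf_of_le ((hbddle p).isCoboundedUnder_ge)
        (Filter.Eventually.of_forall fun k => (hq01 _ _).1)
    · have hle : ∀ k, q (φ k) (e i) ≤ q (φ k) p := fun k => hqle _ _ _ hib
      have heq : A i = Filter.liminf (fun k => q (φ k) (e i)) Filter.atTop :=
        ((hconv' i).liminf_eq).symm
      rw [heq]
      exact Filter.liminf_le_liminf (Filter.Eventually.of_forall hle)
        (Filter.isBoundedUnder_of ⟨0, fun k => (hq01 _ _).1⟩) ((hbddle p).isCoboundedUnder_ge)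
  -- limsup ≤ U p
  have hkey2 : ∀ p, Filter.limsup (fun k => q (φ k) p) Filter.atTop ≤ U p := by
    intro p
    refine le_csInf (hTne p) ?_
    rintro x (rfl | ⟨i, hib, rfl⟩)
    · exact Filter.limsup_le_of_le ((hbddge p).isCoboundedUnder_le)
        (Filter.Eventually.of_forall fun k => (hq01 _ _).2)
    · have hle : ∀ k, q (φ k) p ≤ q (φ k) (e i) := fun k => hqle _ _ _ hib
      have heq : A i = Filter.limsup (fun k => q (φ k) (e i)) Filter.atTop :=
        ((hconv' i).limsup_eq).symm
      rw [heq]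
      exact Filter.limsup_le_limsup (Filter.Eventually.of_forall hle)
        ((hbddge p).isCoboundedUnder_le) (Filter.isBoundedUnder_of ⟨1, fun k => (hq01 _ _).2⟩)
  -- key separation : blt p p' → U p ≤ L p'
  have hkey3 : ∀ p p' : I01 × I01, blt p p' → U p ≤ L p' := by
    intro p p' h
    obtain ⟨i, h1, h2⟩ := dense_e he h
    calc U p ≤ A i := csInf_le (hTbdd p) (Set.mem_insert_iff.2 (Or.inr ⟨i, h1, rfl⟩))
    _ ≤ L p' := le_csSup (hSbdd p') (Set.mem_insert_iff.2 (Or.inr ⟨i, h2, rfl⟩))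
  -- convergence at points with no gap
  have hgood : ∀ p, U p ≤ L p →
      Filter.Tendsto (fun k => q (φ k) p) Filter.atTop (nhds (L p)) := by
    intro p hUL
    have h1 := hkey1 p
    have h2 := hkey2 p
    have h3 : Filter.liminf (fun k => q (φ k) p) Filter.atTop ≤
        Filter.limsup (fun k => q (φ k) p) Filter.atTop :=
      Filter.liminf_le_limsup (hbddle p) (hbddge p)
    have hinf : Filter.liminf (fun k => q (φ k) p) Filter.atTop = L p :=
      le_antisymm (by linarith) h1
    have hsup : Filter.limsup (fun k => q (φ k) p) Filter.atTop = L p :=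
      le_antisymm (by linarith) (by linarith)
    exact tendsto_of_liminf_eq_limsup hinf hsup (hbddle p) (hbddge p)
  -- semicontinuity of L and U, hence measurability
  have hopen_blt : ∀ i, IsOpen {p' : I01 × I01 | blt (e i) p'} := by
    intro i
    have : {p' : I01 × I01 | blt (e i) p'} =
        ((fun p' : I01 × I01 => ((p'.1 : ℝ))) ⁻¹' Set.Ioi ((e i).1 : ℝ)) ∩
        ((fun p' : I01 × I01 => ((p'.2 : ℝ))) ⁻¹' Set.Iio ((e i).2 : ℝ)) := by
      ext p'
      simp only [Set.mem_setOf_eq, Set.mem_inter_iff, Set.mem_preimage, Set.mem_Ioi, Set.mem_Iio,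
        blt, ← Subtype.coe_lt_coe]
    rw [this]
    exact ((isOpen_Ioi.preimage (continuous_subtype_val.comp continuous_fst)).inter
      (isOpen_Iio.preimage (continuous_subtype_val.comp continuous_snd)))
  have hopen_blt' : ∀ i, IsOpen {p' : I01 × I01 | blt p' (e i)} := by
    intro i
    have : {p' : I01 × I01 | blt p' (e i)} =
        ((fun p' : I01 × I01 => ((p'.1 : ℝ))) ⁻¹' Set.Iio ((e i).1 : ℝ)) ∩
        ((fun p' : I01 × I01 => ((p'.2 : ℝ))) ⁻¹' Set.Ioi ((e i).2 : ℝ)) := by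
      ext p'
      simp only [Set.mem_setOf_eq, Set.mem_inter_iff, Set.mem_preimage, Set.mem_Ioi, Set.mem_Iio,
        blt, ← Subtype.coe_lt_coe]
    rw [this]
    exact ((isOpen_Iio.preimage (continuous_subtype_val.comp continuous_fst)).inter
      (isOpen_Ioi.preimage (continuous_subtype_val.comp continuous_snd)))
  have hLlsc : LowerSemicontinuous L := by
    intro p c hc
    obtain ⟨x, hx, hcx⟩ := exists_lt_of_lt_csSup (hSne p) hc
    rcases hx with rfl | ⟨i, hib, rfl⟩
    · exact Filter.Eventually.of_forall fun p' => lt_of_lt_of_le hcx (hL0 p')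
    · filter_upwards [(hopen_blt i).mem_nhds hib] with p' hp'
      exact lt_of_lt_of_le hcx (le_csSup (hSbdd p') (Set.mem_insert_iff.2 (Or.inr ⟨i, hp', rfl⟩)))
  have hUusc : UpperSemicontinuous U := by
    intro p c hc
    obtain ⟨x, hx, hcx⟩ := exists_lt_of_csInf_lt (hTne p) hc
    rcases hx with rfl | ⟨i, hib, rfl⟩
    · exact Filter.Eventually.of_forall fun p' => lt_of_le_of_lt (hU1 p') hcx
    · filter_upwards [(hopen_blt' i).mem_nhds hib] with p' hp'
      exact lt_of_le_of_lt (csInf_le (hTbdd p') (Set.mem_insert_iff.2 (Or.inr ⟨i, hp', rfl⟩))) hcx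
  have hLm : Measurable L := hLlsc.measurable
  have hUm : Measurable U := hUusc.measurable
  -- the bad sets
  set Nm : ℕ → Set (I01 × I01) := fun m => {p | 1/((m:ℝ)+1) < U p - L p} with hNmdef
  have hNm_meas : ∀ m, MeasurableSet (Nm m) :=
    fun m => measurableSet_lt measurable_const (hUm.sub hLm)
  -- on a fixed antidiagonal the bad set is finite
  have hstep : ∀ m (p p' : I01 × I01), p ∈ Nm m → blt p p' →
      ⌊((m:ℝ)+1) * L p⌋₊ < ⌊((m:ℝ)+1) * L p'⌋₊ := by
    intro m p p' hp hb
    have h1 : L p + 1/((m:ℝ)+1) < U p := by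
      have := hp
      simp only [hNmdef, Set.mem_setOf_eq] at this
      linarith
    have h2 : U p ≤ L p' := hkey3 p p' hb
    have hm1 : (0:ℝ) < (m:ℝ)+1 := by positivity
    have h3 : ((m:ℝ)+1) * L p + 1 < ((m:ℝ)+1) * L p' := by
      have := (div_lt_iff₀ hm1).1 (by linarith : 1/((m:ℝ)+1) < L p' - L p)
      nlinarith
    have h4 : (⌊((m:ℝ)+1) * L p⌋₊ : ℝ) ≤ ((m:ℝ)+1) * L p :=
      Nat.floor_le (mul_nonneg (by positivity) (hL0 p))
    have h5 : (⌊((m:ℝ)+1) * L p⌋₊ + 1 : ℕ) ≤ ⌊((m:ℝ)+1) * L p'⌋₊ := by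
      apply Nat.le_floor
      push_cast
      linarith
    omega
  have hfin : ∀ (m : ℕ) (c : ℝ),
      Set.Finite {p : I01 × I01 | p ∈ Nm m ∧ (p.1 : ℝ) + (p.2 : ℝ) = c} := by
    intro m c
    apply Set.Finite.of_finite_image (f := fun p => ⌊((m:ℝ)+1) * L p⌋₊)
    · apply (Set.finite_Iic (m+1)).subset
      rintro n ⟨p, -, rfl⟩
      have : ((m:ℝ)+1) * L p ≤ ((m:ℝ)+1) := by nlinarith [hL1 p, hL0 p]
      calc ⌊((m:ℝ)+1) * L p⌋₊ ≤ ⌊((m:ℝ)+1)⌋₊ := Nat.floor_le_floor this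
      _ = m + 1 := by rw [show ((m:ℝ)+1) = ((m+1 : ℕ) : ℝ) by push_cast; ring, Nat.floor_natCast]
    · intro p hp p' hp' hf
      by_contra hne
      rcases lt_trichotomy p.1 p'.1 with h | h | h
      · have hb : blt p p' := by
          refine ⟨h, ?_⟩
          rw [← Subtype.coe_lt_coe]
          have := hp.2; have := hp'.2
          have hcc : (p.1 : ℝ) < (p'.1 : ℝ) := h
          linarith
        exact absurd hf (Nat.ne_of_lt (hstep m p p' hp.1 hb))
      · apply hne
        have h2 : (p.2 : ℝ) = (p'.2 : ℝ) := by
          have := hp.2; have := hp'.2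
          have : (p.1 : ℝ) = (p'.1 : ℝ) := by rw [h]
          linarith [hp.2, hp'.2]
        exact Prod.ext h (Subtype.ext h2)
      · have hb : blt p' p := by
          refine ⟨h, ?_⟩
          rw [← Subtype.coe_lt_coe]
          have hcc : (p'.1 : ℝ) < (p.1 : ℝ) := h
          linarith [hp.2, hp'.2]
        exact absurd hf.symm (Nat.ne_of_lt (hstep m p' p hp'.1 hb))
  -- each bad set is Lebesgue-null
  have hnull : ∀ m, volume (Nm m) = 0 := by
    intro m
    set j : I01 × I01 → ℝ × ℝ := fun p => ((p.1 : ℝ), (p.2 : ℝ)) with hjdef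
    have hemb : MeasurableEmbedding j :=
      (MeasurableEmbedding.subtype_coe measurableSet_Icc).prodMap
        (MeasurableEmbedding.subtype_coe measurableSet_Icc)
    set B : Set (ℝ × ℝ) := j '' Nm m with hBdef
    have hB : MeasurableSet B := hemb.measurableSet_image.2 (hNm_meas m)
    have hmpcoe : MeasurePreserving (Subtype.val : I01 → ℝ) volume
        (volume.restrict (Set.Icc 0 1)) :=
      ⟨measurable_subtype_coe, by
        rw [Measure.Subtype.volume_def]
        exact map_comap_subtype_coe measurableSet_Icc volume⟩
    have hj : MeasurePreserving j volume
        ((volume.restrict (Set.Icc 0 1)).prod (volume.restrict (Set.Icc 0 1))) := by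
      have := hmpcoe.prod hmpcoe
      exact this
    have hvol1 : volume (Nm m) =
        ((volume.restrict (Set.Icc 0 1)).prod (volume.restrict (Set.Icc 0 1))) B := by
      have hpre : j ⁻¹' B = Nm m := Set.preimage_image_eq _ hemb.injective
      calc volume (Nm m) = volume (j ⁻¹' B) := by rw [hpre]
      _ = (Measure.map j volume) B := (Measure.map_apply hemb.measurable hB).symm
      _ = _ := by rw [hj.map_eq]
    have hvol2 : ((volume.restrict (Set.Icc 0 1)).prod (volume.restrict (Set.Icc 0 1))) B ≤
        (volume.prod volume) B := by
      rw [Measure.prod_restrict, Measure.restrict_apply hB]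
      exact measure_mono Set.inter_subset_left
    -- shear and Fubini
    have hshear := measurePreserving_sub_prod (volume : Measure ℝ) (volume : Measure ℝ)
    have hvol3 : (volume.prod volume) B =
        (volume.prod volume) ((fun z : ℝ × ℝ => (z.1 - z.2, z.2)) ⁻¹' B) :=
      (hshear.measure_preimage hB.nullMeasurableSet).symm
    have hCm : MeasurableSet ((fun z : ℝ × ℝ => (z.1 - z.2, z.2)) ⁻¹' B) :=
      hB.preimage ((measurable_fst.sub measurable_snd).prodMk measurable_snd)
    have hslice : ∀ x : ℝ,
        volume (Prod.mk x ⁻¹' ((fun z : ℝ × ℝ => (z.1 - z.2, z.2)) ⁻¹' B)) = 0 := by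
      intro x
      have hsub : Prod.mk x ⁻¹' ((fun z : ℝ × ℝ => (z.1 - z.2, z.2)) ⁻¹' B) ⊆
          (fun p : I01 × I01 => (p.2 : ℝ)) ''
            {p : I01 × I01 | p ∈ Nm m ∧ (p.1 : ℝ) + (p.2 : ℝ) = x} := by
        intro y hy
        simp only [Set.mem_preimage] at hy
        obtain ⟨p, hpmem, hpeq⟩ := hy
        have h1 : (p.1 : ℝ) = x - y := congrArg Prod.fst hpeq
        have h2 : (p.2 : ℝ) = y := congrArg Prod.snd hpeq
        exact ⟨p, ⟨hpmem, by rw [h1, h2]; ring⟩, h2⟩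
      have hfin' : Set.Finite ((fun p : I01 × I01 => (p.2 : ℝ)) ''
          {p : I01 × I01 | p ∈ Nm m ∧ (p.1 : ℝ) + (p.2 : ℝ) = x}) :=
        (hfin m x).image _
      exact measure_mono_null hsub (hfin'.measure_zero volume)
    have hvol4 : (volume.prod volume) ((fun z : ℝ × ℝ => (z.1 - z.2, z.2)) ⁻¹' B) = 0 := by
      rw [Measure.prod_apply hCm]
      simp only [hslice, lintegral_zero]
    rw [hvol1]
    exact le_antisymm (by rw [← hvol4, ← hvol3]; exact hvol2) zero_le
  -- assemble
  refine ⟨φ, L, hφ, fun p => ⟨hL0 p, hL1 p⟩, ?_, ?_, ?_⟩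
  · intro ω θ θ' h
    exact hLmono (θ, ω) (θ', ω) h le_rfl
  · intro θ ω ω' h
    exact hLmono (θ, ω') (θ, ω) le_rfl h
  · rw [MeasureTheory.ae_iff]
    have hsub : {p : I01 × I01 |
        ¬ Filter.Tendsto (fun k => q (φ k) p) Filter.atTop (nhds (L p))} ⊆ ⋃ m, Nm m := by
      intro p hp
      simp only [Set.mem_setOf_eq] at hp
      by_contra hnot
      simp only [Set.mem_iUnion, hNmdef, Set.mem_setOf_eq, not_exists, not_lt] at hnot
      have hUL : U p ≤ L p := by
        by_contra hlt
        push_neg at hlt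
        obtain ⟨n, hn⟩ := exists_nat_one_div_lt (by linarith : (0:ℝ) < U p - L p)
        exact absurd (hnot n) (not_le.2 hn)
      exact hp (hgood p hUL)
    exact measure_mono_null hsub (measure_iUnion_null hnull)
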